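/- Let u*: (T₋, T₊) → ℝⁿ with T₊ < ∞ be a solution of ü = ∇U(u) with ½|u̇|² = U(u) and lim_{t→T₊} u*(t) = x₊ where U(x₊) = 0. Define v*(T₊ + t) = u*(T₊ − t) for t ∈ (0, T₊ − T₋), v*(T₊) = x₊. Then v* is a C² solution of ü = ∇U(u) on (T₋, 2T₊ − T₋) satisfying ½|v̇*|² = U(v*), with v̇*(T₊) = 0. -/

import Mathlib

open Set Filter Topology

lemma hasDerivAt_glue {E : Type*} [NormedAddCommGroup E] [NormedSpace ℝ E]
    {f g : ℝ → E} {x a b : ℝ} (hax : a < x) (hxb : x < b)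
    (hl : ∀ y ∈ Ioo a x, HasDerivAt f (g y) y)
    (hr : ∀ y ∈ Ioo x b, HasDerivAt f (g y) y)
    (hfl : Tendsto f (𝓝[<] x) (𝓝 (f x)))
    (hfr : Tendsto f (𝓝[>] x) (𝓝 (f x)))
    (hgl : Tendsto g (𝓝[<] x) (𝓝 (g x)))
    (hgr : Tendsto g (𝓝[>] x) (𝓝 (g x))) :
    HasDerivAt f (g x) x := by
  have hsl : Ioo a x ∈ 𝓝[<] x := Ioo_mem_nhdsLT_of_mem ⟨hax, le_refl x⟩
  have hsr : Ioo x b ∈ 𝓝[>] x := Ioo_mem_nhdsGT_of_mem ⟨le_refl x, hxb⟩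
  have A : HasDerivWithinAt f (g x) (Iic x) x := by
    apply hasDerivWithinAt_Iic_of_tendsto_deriv
      (fun y hy => (hl y hy).differentiableAt.differentiableWithinAt)
      (hfl.mono_left (nhdsWithin_mono x Ioo_subset_Iio_self)) hsl
    exact hgl.congr' (eventually_of_mem hsl fun y hy => ((hl y hy).deriv).symm)
  have B : HasDerivWithinAt f (g x) (Ici x) x := by
    apply hasDerivWithinAt_Ici_of_tendsto_deriv
      (fun y hy => (hr y hy).differentiableAt.differentiableWithinAt)
      (hfr.mono_left (nhdsWithin_mono x Ioo_subset_Ioi_self)) hsr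
    exact hgr.congr' (eventually_of_mem hsr fun y hy => ((hr y hy).deriv).symm)
  simpa using A.union B


/-- Reflection principle (Corollary 1.2): a zero-energy solution of
`ü = ∇U(u)` on `(T₋,T₊)` reaching a zero `x₊` of `U` at the finite time `T₊`
with vanishing velocity extends, by time reversal, to a `C²` zero-energy
solution on `(T₋, 2T₊ − T₋)` with `v̇(T₊) = 0`. -/
theorem reflection_extension (n : ℕ) (U : EuclideanSpace ℝ (Fin n) → ℝ)
    (hU : ContDiff ℝ 2 U) (Tm Tp : ℝ) (hT : Tm < Tp)
    (u u' : ℝ → EuclideanSpace ℝ (Fin n))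
    (hu : ∀ t ∈ Ioo Tm Tp, HasDerivAt u (u' t) t)
    (hu' : ∀ t ∈ Ioo Tm Tp, HasDerivAt u' (gradient U (u t)) t)
    (hen : ∀ t ∈ Ioo Tm Tp, (1 : ℝ) / 2 * ‖u' t‖ ^ 2 = U (u t))
    (xp : EuclideanSpace ℝ (Fin n)) (hxp : U xp = 0)
    (hlim : Tendsto u (𝓝[<] Tp) (𝓝 xp))
    (hlim' : Tendsto u' (𝓝[<] Tp) (𝓝 0)) :
    ∃ v v' : ℝ → EuclideanSpace ℝ (Fin n),
      (∀ t ∈ Ioo Tm Tp, v t = u t) ∧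
      v Tp = xp ∧
      (∀ t ∈ Ioo (0 : ℝ) (Tp - Tm), v (Tp + t) = u (Tp - t)) ∧
      (∀ t ∈ Ioo Tm (2 * Tp - Tm),
        HasDerivAt v (v' t) t ∧
        HasDerivAt v' (gradient U (v t)) t ∧
        (1 : ℝ) / 2 * ‖v' t‖ ^ 2 = U (v t)) ∧
      v' Tp = 0 := by
  classical
  set v : ℝ → EuclideanSpace ℝ (Fin n) :=
    fun t => if t < Tp then u t else if t = Tp then xp else u (2 * Tp - t) with hv
  set v' : ℝ → EuclideanSpace ℝ (Fin n) :=
    fun t => if t < Tp then u' t else if t = Tp then 0 else -u' (2 * Tp - t) with hv'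
  have hTp2 : Tp < 2 * Tp - Tm := by linarith
  -- basic value lemmas
  have hveq : ∀ t ∈ Ioo Tm Tp, v t = u t := fun t ht => by simp [hv, ht.2]
  have hveq' : ∀ t ∈ Ioo Tm Tp, v' t = u' t := fun t ht => by simp [hv', ht.2]
  have hveqR : ∀ t ∈ Ioo Tp (2 * Tp - Tm), v t = u (2 * Tp - t) := fun t ht => by
    simp [hv, not_lt.2 ht.1.le, ne_of_gt ht.1, (ne_of_gt ht.1 : t ≠ Tp)]
  have hveqR' : ∀ t ∈ Ioo Tp (2 * Tp - Tm), v' t = -u' (2 * Tp - t) := fun t ht => by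
    simp [hv', not_lt.2 ht.1.le, (ne_of_gt ht.1 : t ≠ Tp)]
  have hvTp : v Tp = xp := by simp [hv]
  have hv'Tp : v' Tp = 0 := by simp [hv']
  -- reflection map
  have hmap : Tendsto (fun t : ℝ => 2 * Tp - t) (𝓝[>] Tp) (𝓝[<] Tp) := by
    rw [tendsto_nhdsWithin_iff]
    constructor
    · have : Tendsto (fun t : ℝ => 2 * Tp - t) (𝓝 Tp) (𝓝 (2 * Tp - Tp)) :=
        (tendsto_const_nhds.sub tendsto_id)
      simpa [two_mul] using this.mono_left nhdsWithin_le_nhds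
    · exact eventually_of_mem self_mem_nhdsWithin fun t (ht : Tp < t) => by
        simp only [mem_Iio]; linarith
  have hmapIoo : ∀ t ∈ Ioo Tp (2 * Tp - Tm), (2 * Tp - t) ∈ Ioo Tm Tp :=
    fun t ht => ⟨by linarith [ht.2], by linarith [ht.1]⟩
  -- one-sided limits of v
  have hIooL : Ioo Tm Tp ∈ 𝓝[<] Tp := Ioo_mem_nhdsLT_of_mem ⟨hT, le_refl Tp⟩
  have hIooR : Ioo Tp (2 * Tp - Tm) ∈ 𝓝[>] Tp := Ioo_mem_nhdsGT_of_mem ⟨le_refl Tp, hTp2⟩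
  have hvL : Tendsto v (𝓝[<] Tp) (𝓝 xp) :=
    hlim.congr' (eventually_of_mem hIooL fun t ht => (hveq t ht).symm)
  have hvR : Tendsto v (𝓝[>] Tp) (𝓝 xp) :=
    (hlim.comp hmap).congr' (eventually_of_mem hIooR fun t ht => (hveqR t ht).symm)
  have hv'L : Tendsto v' (𝓝[<] Tp) (𝓝 0) :=
    hlim'.congr' (eventually_of_mem hIooL fun t ht => (hveq' t ht).symm)
  have hv'R : Tendsto v' (𝓝[>] Tp) (𝓝 0) := by
    have : Tendsto (fun t => -u' (2 * Tp - t)) (𝓝[>] Tp) (𝓝 (-0 : EuclideanSpace ℝ (Fin n))) :=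
      ((hlim'.comp hmap)).neg
    simpa using this.congr' (eventually_of_mem hIooR fun t ht => (hveqR' t ht).symm)
  -- derivatives at interior points, left side
  have hdL : ∀ t ∈ Ioo Tm Tp, HasDerivAt v (v' t) t := by
    intro t ht
    have he : v =ᶠ[𝓝 t] u := eventually_of_mem (isOpen_Ioo.mem_nhds ht) fun s hs => hveq s hs
    rw [hveq' t ht]
    exact (hu t ht).congr_of_eventuallyEq he
  have hdL' : ∀ t ∈ Ioo Tm Tp, HasDerivAt v' (gradient U (v t)) t := by
    intro t ht
    have he : v' =ᶠ[𝓝 t] u' := eventually_of_mem (isOpen_Ioo.mem_nhds ht) fun s hs => hveq' s hs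
    rw [hveq t ht]
    exact (hu' t ht).congr_of_eventuallyEq he
  -- derivatives at interior points, right side
  have hinner : ∀ t : ℝ, HasDerivAt (fun s : ℝ => 2 * Tp - s) (-1) t := by
    intro t
    simpa using (hasDerivAt_id' t).const_sub (2 * Tp)
  have hdR : ∀ t ∈ Ioo Tp (2 * Tp - Tm), HasDerivAt v (v' t) t := by
    intro t ht
    have hs := hmapIoo t ht
    have hcomp : HasDerivAt (fun s => u (2 * Tp - s)) ((-1 : ℝ) • u' (2 * Tp - t)) t :=
      (hu _ hs).scomp t (hinner t)
    have he : v =ᶠ[𝓝 t] (fun s => u (2 * Tp - s)) :=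
      eventually_of_mem (isOpen_Ioo.mem_nhds ht) fun s hs' => hveqR s hs'
    rw [hveqR' t ht]
    simpa using hcomp.congr_of_eventuallyEq he
  have hdR' : ∀ t ∈ Ioo Tp (2 * Tp - Tm), HasDerivAt v' (gradient U (v t)) t := by
    intro t ht
    have hs := hmapIoo t ht
    have hcomp : HasDerivAt (fun s => -u' (2 * Tp - s))
        (-((-1 : ℝ) • gradient U (u (2 * Tp - t)))) t :=
      ((hu' _ hs).scomp t (hinner t)).neg
    have he : v' =ᶠ[𝓝 t] (fun s => -u' (2 * Tp - s)) :=
      eventually_of_mem (isOpen_Ioo.mem_nhds ht) fun s hs' => hveqR' s hs'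
    rw [hveqR t ht]
    simpa using hcomp.congr_of_eventuallyEq he
  -- continuity of the gradient
  have hgradcont : Continuous (gradient U) := by
    have h1 : Continuous fun x => fderiv ℝ U x := hU.continuous_fderiv (by norm_num)
    exact (LinearIsometryEquiv.continuous _).comp h1
  -- derivative of v at Tp
  have hDvTp : HasDerivAt v (v' Tp) Tp := by
    rw [hv'Tp]
    have := hasDerivAt_glue (f := v) (g := v') hT hTp2 hdL hdR
      (by rw [hvTp]; exact hvL) (by rw [hvTp]; exact hvR)
      (by rw [hv'Tp]; exact hv'L) (by rw [hv'Tp]; exact hv'R)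
    rwa [hv'Tp] at this
  -- derivative of v' at Tp
  have hDv'Tp : HasDerivAt v' (gradient U (v Tp)) Tp := by
    have hgl : Tendsto (fun t => gradient U (v t)) (𝓝[<] Tp) (𝓝 (gradient U (v Tp))) := by
      rw [hvTp]; exact (hgradcont.continuousAt.tendsto).comp hvL
    have hgr : Tendsto (fun t => gradient U (v t)) (𝓝[>] Tp) (𝓝 (gradient U (v Tp))) := by
      rw [hvTp]; exact (hgradcont.continuousAt.tendsto).comp hvR
    exact hasDerivAt_glue (f := v') (g := fun t => gradient U (v t)) hT hTp2 hdL' hdR'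
      (by rw [hv'Tp]; exact hv'L) (by rw [hv'Tp]; exact hv'R) hgl hgr
  refine ⟨v, v', hveq, hvTp, ?_, ?_, hv'Tp⟩
  · intro t ht
    have h1 : Tp + t ∈ Ioo Tp (2 * Tp - Tm) := ⟨by linarith [ht.1], by linarith [ht.2]⟩
    rw [hveqR _ h1]; ring_nf
  · intro t ht
    rcases lt_trichotomy t Tp with h | h | h
    · have ht' : t ∈ Ioo Tm Tp := ⟨ht.1, h⟩
      refine ⟨hdL t ht', hdL' t ht', ?_⟩
      rw [hveq t ht', hveq' t ht']; exact hen t ht'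
    · subst h
      refine ⟨hDvTp, hDv'Tp, ?_⟩
      rw [hvTp, hv'Tp, hxp]; simp
    · have ht' : t ∈ Ioo Tp (2 * Tp - Tm) := ⟨h, ht.2⟩
      refine ⟨hdR t ht', hdR' t ht', ?_⟩
      rw [hveqR t ht', hveqR' t ht']
      simpa using hen _ (hmapIoo t ht')
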